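/- Let k ≥ 1 and let d : ℕ → ℕ be a sequence such that d i ≤ k for all i, d i = k for some i, σ^j d ⪯ d for every j ∈ ℕ, and d is not eventually 0 (for every N there exists i ≥ N with d i ≠ 0). Then there exists a real number β with k < β ≤ k + 1 such that ∑_{i=0}^∞ d i / β^(i+1) = 1. -/

import Mathlib

namespace BetaShift

variable {A : Type*}

/-- The shift map: `(shift x) n = x (n+1)`. -/
def shift (x : ℕ → A) : ℕ → A := fun n => x (n + 1)

/-- Lexicographic order on one-sided sequences: `x = y`, or there is an index `i`
such that `x j = y j` for all `j < i` and `x i < y i`. -/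
def SeqLe [LinearOrder A] (x y : ℕ → A) : Prop :=
  x = y ∨ ∃ i, (∀ j, j < i → x j = y j) ∧ x i < y i

/-- A word `w` occurs in the sequence `x`. -/
def Occurs (w : List A) (x : ℕ → A) : Prop :=
  ∃ i : ℕ, ∀ j : Fin w.length, x (i + j) = w.get j

/-- `Complexity x n` is the number `Φ_n(x)` of distinct words of length `n` occurring in `x`. -/
noncomputable def Complexity (x : ℕ → A) (n : ℕ) : ℕ :=
  Set.ncard {w : List A | w.length = n ∧ Occurs w x}

/-- A sequence is eventually periodic if there are `p ≥ 1` and `N` with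
`d (i + p) = d i` for all `i ≥ N`. -/
def EventuallyPeriodic (d : ℕ → A) : Prop :=
  ∃ p, 1 ≤ p ∧ ∃ N, ∀ i, N ≤ i → d (i + p) = d i

/-- `(d)_k`, the `k`-letter prefix of the sequence `d`, as a word. -/
def prefixWord (d : ℕ → A) (k : ℕ) : List A := List.ofFn (fun i : Fin k => d i)

variable {m : ℕ}

/-- `d` is admissible: every shift of `d` is lexicographically ≤ `d`,
and `d` is not eventually `0`. -/
def Admissible (d : ℕ → Fin m) : Prop :=
  (∀ i, SeqLe (shift^[i] d) d) ∧ ∀ N, ∃ i, N ≤ i ∧ (d i).val ≠ 0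

/-- The one-sided β-shift `X_d` determined by the admissible sequence `d`. -/
def XSet (d : ℕ → Fin m) : Set (ℕ → Fin m) :=
  {x | ∀ i, SeqLe (shift^[i] x) d}

/-- The language of `X_d`: all words occurring in some point of `X_d`. -/
def Lang (d : ℕ → Fin m) : Set (List (Fin m)) :=
  {w | ∃ x ∈ XSet d, Occurs w x}

/-- The follower set of the word `w` in `X_d`. -/
def Fol (d : ℕ → Fin m) (w : List (Fin m)) : Set (List (Fin m)) :=
  {u | w ++ u ∈ Lang d}

/-- The predecessor set of the word `w` in `X_d`. -/
def Pred (d : ℕ → Fin m) (w : List (Fin m)) : Set (List (Fin m)) :=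
  {s | s ++ w ∈ Lang d}

/-- The extender set of the word `w` in `X_d`. -/
def Ext (d : ℕ → Fin m) (w : List (Fin m)) : Set (List (Fin m) × List (Fin m)) :=
  {p | p.1 ++ w ++ p.2 ∈ Lang d}

/-- `|F(n)|`: the number of distinct follower sets of words of length `n` in `X_d`. -/
noncomputable def FolCount (d : ℕ → Fin m) (n : ℕ) : ℕ :=
  Set.ncard {S | ∃ w ∈ Lang d, w.length = n ∧ S = Fol d w}

/-- `|P(n)|`: the number of distinct predecessor sets of words of length `n` in `X_d`. -/
noncomputable def PredCount (d : ℕ → Fin m) (n : ℕ) : ℕ :=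
  Set.ncard {S | ∃ w ∈ Lang d, w.length = n ∧ S = Pred d w}

/-- `|E(n)|`: the number of distinct extender sets of words of length `n` in `X_d`. -/
noncomputable def ExtCount (d : ℕ → Fin m) (n : ℕ) : ℕ :=
  Set.ncard {S | ∃ w ∈ Lang d, w.length = n ∧ S = Ext d w}

/-- The largest `k ≤ n` such that the `k`-letter prefix of `d` is a suffix of `v`
(`k = 0`, the empty prefix, always works). -/
def classIndex (d : ℕ → Fin m) (n : ℕ) (v : List (Fin m)) : ℕ :=
  Nat.findGreatest (fun k => prefixWord d k <:+ v) n

/-- Lexicographic comparison of (equal-length) words: `u = v`, or at the first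
index where they differ, `u` takes the smaller value. -/
def WordLe [LinearOrder A] (u v : List A) : Prop :=
  u = v ∨ ∃ i, ∃ (hu : i < u.length) (hv : i < v.length),
    (∀ j (hju : j < u.length) (hjv : j < v.length), j < i → u.get ⟨j, hju⟩ = v.get ⟨j, hjv⟩) ∧
    u.get ⟨i, hu⟩ < v.get ⟨i, hv⟩

end BetaShift

open BetaShift

/-- there exists `β ∈ (k, k+1]` with `∑ d i / β^(i+1) = 1`. -/
theorem stmt0 (k : ℕ) (hk : 1 ≤ k) (d : ℕ → ℕ)
    (hbd : ∀ i, d i ≤ k) (hattain : ∃ i, d i = k)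
    (hshift : ∀ j : ℕ, SeqLe (shift^[j] d) d)
    (hnz : ∀ N : ℕ, ∃ i, N ≤ i ∧ d i ≠ 0) :
    ∃ β : ℝ, (k : ℝ) < β ∧ β ≤ (k : ℝ) + 1 ∧
      ∑' i : ℕ, (d i : ℝ) / β ^ (i + 1) = 1 := by
  -- iterated shift formula
  have hiter : ∀ i n, (shift^[i] d) n = d (n + i) := by
    intro i
    induction i with
    | zero => simp
    | succ i ih =>
      intro n
      rw [Function.iterate_succ_apply']
      show (shift^[i] d) (n + 1) = d (n + (i + 1))
      rw [ih]
      congr 1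
      omega
  -- d 0 = k
  obtain ⟨i, hik⟩ := hattain
  have hd0 : d 0 = k := by
    rcases hshift i with heq | ⟨l, hpre, hlt⟩
    · have h := congrFun heq 0
      rw [hiter] at h
      simp only [Nat.zero_add] at h
      omega
    · rcases Nat.eq_zero_or_pos l with rfl | hl
      · rw [hiter] at hlt
        simp only [Nat.zero_add] at hlt
        have := hbd 0
        omega
      · have h := hpre 0 hl
        rw [hiter] at h
        simp only [Nat.zero_add] at h
        omega
  obtain ⟨i0, hi0ge, hi0ne⟩ := hnz 1
  have hkp : (0:ℝ) < (k:ℝ) + 1 := by positivity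
  have hk1 : (1:ℝ) ≤ (k:ℝ) := by exact_mod_cast hk
  set ε : ℝ := 1 / (2 * ((k:ℝ)+1) ^ i0) with hεdef
  have hεpos : 0 < ε := by positivity
  have hεmul : ε * ((k:ℝ)+1) ^ i0 = 1/2 := by
    rw [hεdef]; field_simp
  have hεle : ε ≤ 1/2 := by
    have h1 : (1:ℝ) ≤ ((k:ℝ)+1) ^ i0 := one_le_pow₀ (by linarith)
    nlinarith
  set β0 : ℝ := (k:ℝ) + ε with hβ0def
  have hβ0k : (k:ℝ) < β0 := by rw [hβ0def]; linarith
  have hβ0pos : 0 < β0 := by linarith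
  have hβ01 : 1 < β0 := by linarith
  have hβ0le : β0 ≤ (k:ℝ) + 1 := by rw [hβ0def]; linarith
  -- summability
  have hrlt : β0⁻¹ < 1 := by
    rw [inv_lt_one_iff₀]; right; exact hβ01
  have hgeo : Summable (fun i : ℕ => (k:ℝ) * β0⁻¹ * β0⁻¹ ^ i) :=
    (summable_geometric_of_lt_one (by positivity) hrlt).mul_left _
  have hbound : ∀ (x : ℝ), β0 ≤ x → ∀ n : ℕ, (d n : ℝ) / x ^ (n+1) ≤ (k:ℝ) * β0⁻¹ * β0⁻¹ ^ n := by
    intro x hx n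
    have hxpos : 0 < x := lt_of_lt_of_le hβ0pos hx
    have h1 : (d n : ℝ) / x ^ (n+1) ≤ (k:ℝ) / β0 ^ (n+1) := by
      apply div_le_div₀ (by positivity) (by exact_mod_cast hbd n) (by positivity)
      exact pow_le_pow_left₀ hβ0pos.le hx _
    calc (d n : ℝ) / x ^ (n+1) ≤ (k:ℝ) / β0 ^ (n+1) := h1
      _ = (k:ℝ) * β0⁻¹ * β0⁻¹ ^ n := by
          rw [div_eq_mul_inv, ← inv_pow, pow_succ]; ring
  have hsum : ∀ x : ℝ, β0 ≤ x → Summable (fun i : ℕ => (d i : ℝ) / x ^ (i+1)) := by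
    intro x hx
    have hxpos : 0 < x := lt_of_lt_of_le hβ0pos hx
    exact Summable.of_nonneg_of_le
      (fun n => by positivity)
      (hbound x hx) hgeo
  set f : ℝ → ℝ := fun x => ∑' i : ℕ, (d i : ℝ) / x ^ (i+1) with hfdef
  -- continuity on [β0, k+1]
  have hcont : ContinuousOn f (Set.Icc β0 ((k:ℝ)+1)) := by
    apply continuousOn_tsum (u := fun i : ℕ => (k:ℝ) * β0⁻¹ * β0⁻¹ ^ i) _ hgeo
    · intro n x hx
      have hxpos : 0 < x := lt_of_lt_of_le hβ0pos hx.1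
      rw [Real.norm_eq_abs, abs_of_nonneg (by positivity)]
      exact hbound x hx.1 n
    · intro n
      apply ContinuousOn.div continuousOn_const (by fun_prop)
      intro x hx
      have hxpos : 0 < x := lt_of_lt_of_le hβ0pos hx.1
      positivity
  -- lower bound at β0
  have hfβ0 : 1 < f β0 := by
    have hs := hsum β0 le_rfl
    have hne : (0:ℕ) ≠ i0 := by omega
    have hterm : (d 0 : ℝ) / β0 ^ (0+1) + (d i0 : ℝ) / β0 ^ (i0+1) ≤ f β0 := by
      have h := Summable.sum_le_tsum ({0, i0} : Finset ℕ)
        (fun n _ => by positivity) hs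
      rwa [Finset.sum_insert (by simpa using hne), Finset.sum_singleton] at h
    have hd0' : (d 0 : ℝ) = (k:ℝ) := by exact_mod_cast hd0
    have hdi0 : (1:ℝ) ≤ (d i0 : ℝ) := by
      have : 1 ≤ d i0 := Nat.one_le_iff_ne_zero.mpr hi0ne
      exact_mod_cast this
    have hb : (β0 - (k:ℝ)) * β0 ^ i0 ≤ 1/2 := by
      have h1 : β0 ^ i0 ≤ ((k:ℝ)+1) ^ i0 := pow_le_pow_left₀ hβ0pos.le hβ0le _
      have h2 : β0 - (k:ℝ) = ε := by rw [hβ0def]; ring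
      rw [h2]
      calc ε * β0 ^ i0 ≤ ε * ((k:ℝ)+1) ^ i0 := by
            exact mul_le_mul_of_nonneg_left h1 hεpos.le
        _ = 1/2 := hεmul
    have key : 1 < (k:ℝ) / β0 + 1 / β0 ^ (i0+1) := by
      have hPpos : (0:ℝ) < β0 ^ i0 := pow_pos hβ0pos _
      have heq : (k:ℝ) / β0 + 1 / β0 ^ (i0+1)
          = 1 + (1 - (β0 - (k:ℝ)) * β0 ^ i0) / β0 ^ (i0+1) := by
        rw [pow_succ]
        field_simp
        ring
      rw [heq]
      have : 0 < (1 - (β0 - (k:ℝ)) * β0 ^ i0) / β0 ^ (i0+1) :=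
        div_pos (by nlinarith [hb]) (by positivity)
      linarith
    have h0 : (d 0 : ℝ) / β0 ^ (0+1) = (k:ℝ) / β0 := by
      rw [hd0', pow_one]
    have hi : 1 / β0 ^ (i0+1) ≤ (d i0 : ℝ) / β0 ^ (i0+1) := by gcongr
    calc (1:ℝ) < (k:ℝ) / β0 + 1 / β0 ^ (i0+1) := key
      _ ≤ (d 0 : ℝ) / β0 ^ (0+1) + (d i0 : ℝ) / β0 ^ (i0+1) := by
          rw [h0]; linarith
      _ ≤ f β0 := hterm
  -- upper bound at k+1
  have hup : f ((k:ℝ)+1) ≤ 1 := by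
    set r : ℝ := ((k:ℝ)+1)⁻¹ with hrdef
    have hrpos : 0 < r := by positivity
    have hrlt1 : r < 1 := by
      rw [hrdef, inv_lt_one_iff₀]; right; linarith
    have hgs : Summable (fun i : ℕ => ((k:ℝ) * r) * r ^ i) :=
      (summable_geometric_of_lt_one hrpos.le hrlt1).mul_left _
    have heq : ∀ n : ℕ, (k:ℝ) / ((k:ℝ)+1) ^ (n+1) = ((k:ℝ) * r) * r ^ n := by
      intro n
      rw [hrdef, div_eq_mul_inv, ← inv_pow, pow_succ]
      ring
    have hle : f ((k:ℝ)+1) ≤ ∑' n : ℕ, ((k:ℝ) * r) * r ^ n := by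
      apply Summable.tsum_le_tsum _ (hsum _ hβ0le) hgs
      intro n
      rw [← heq n]
      apply div_le_div₀ (by positivity) (by exact_mod_cast hbd n) (by positivity) le_rfl
    have hval : ∑' n : ℕ, ((k:ℝ) * r) * r ^ n = 1 := by
      rw [tsum_mul_left, tsum_geometric_of_lt_one hrpos.le hrlt1, hrdef]
      have hkne : (k:ℝ) ≠ 0 := by linarith
      have h1 : (1:ℝ) - ((k:ℝ)+1)⁻¹ = (k:ℝ)/((k:ℝ)+1) := by
        field_simp
        ring
      rw [h1]
      field_simp
    exact le_of_le_of_eq hle hval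
  -- intermediate value theorem
  have hmem : (1:ℝ) ∈ Set.Icc (f ((k:ℝ)+1)) (f β0) := ⟨hup, hfβ0.le⟩
  obtain ⟨β, hβmem, hβeq⟩ := intermediate_value_Icc' hβ0le hcont hmem
  exact ⟨β, lt_of_lt_of_le hβ0k hβmem.1, hβmem.2, hβeq⟩
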